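/- Let α = (α₁, α₂) : ℝ → ℝ² be four times continuously differentiable, let t₀ ∈ ℝ, and suppose α′(t₀) = (0,0) and γ(t₀) := α₁″(t₀)α₂‴(t₀) − α₁‴(t₀)α₂″(t₀) ≠ 0. Then there exist an invertible 2×2 real matrix M and nonzero real numbers c, d such that, writing β(t) = M·(α(t) − α(t₀)), one has β₁(t) − c(t − t₀)² = o((t − t₀)²) and β₂(t) − d(t − t₀)³ = o((t − t₀)³) as t → t₀; that is, the curve has a cusp of order 3/2 at α(t₀). -/

import Mathlib

open Asymptotics Filter Set

/-- MVT step: if `R t₀ = 0` and `R' = o((t-t₀)^n)` then `R = o((t-t₀)^(n+1))`. -/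
private lemma cusp_step {n : ℕ} {R R' : ℝ → ℝ} {t₀ : ℝ}
    (hR : ∀ x, HasDerivAt R (R' x) x) (h0 : R t₀ = 0)
    (h : R' =o[nhds t₀] fun t => (t - t₀) ^ n) :
    R =o[nhds t₀] fun t => (t - t₀) ^ (n + 1) := by
  rw [isLittleO_iff] at h ⊢
  intro ε hε
  have h' := h hε
  rw [Metric.eventually_nhds_iff] at h' ⊢
  obtain ⟨δ, hδ, hb⟩ := h'
  refine ⟨δ, hδ, fun t ht => ?_⟩
  have key : ‖R t - R t₀‖ ≤ (ε * |t - t₀| ^ n) * ‖t - t₀‖ := by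
    refine Convex.norm_image_sub_le_of_norm_hasDerivWithin_le
      (f' := R') (fun x hx => (hR x).hasDerivWithinAt)
      (fun x hx => ?_) (convex_uIcc t₀ t) left_mem_uIcc right_mem_uIcc
    have hxt : |x - t₀| ≤ |t - t₀| := abs_sub_left_of_mem_uIcc hx
    have hxδ : dist x t₀ < δ := by
      rw [Real.dist_eq]
      exact lt_of_le_of_lt hxt (by rwa [Real.dist_eq] at ht)
    have := hb hxδ
    calc ‖R' x‖ ≤ ε * ‖(x - t₀) ^ n‖ := this
      _ = ε * |x - t₀| ^ n := by rw [Real.norm_eq_abs, abs_pow]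
      _ ≤ ε * |t - t₀| ^ n := by
          exact mul_le_mul_of_nonneg_left (pow_le_pow_left₀ (abs_nonneg _) hxt n) hε.le
  rw [h0, sub_zero] at key
  calc ‖R t‖ ≤ (ε * |t - t₀| ^ n) * ‖t - t₀‖ := key
    _ = ε * ‖(t - t₀) ^ (n + 1)‖ := by
        rw [Real.norm_eq_abs, Real.norm_eq_abs, abs_pow, pow_succ]; ring

/-- Peano form of Taylor's theorem for real functions. -/
private lemma cusp_peano : ∀ (n : ℕ) (f : ℝ → ℝ), ContDiff ℝ n f → ∀ t₀ : ℝ,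
    (fun t => f t - ∑ k ∈ Finset.range (n + 1),
        iteratedDeriv k f t₀ / k.factorial * (t - t₀) ^ k)
      =o[nhds t₀] fun t => (t - t₀) ^ n := by
  intro n
  induction n with
  | zero =>
    intro f hf t₀
    simp only [Finset.sum_range_one, iteratedDeriv_zero, Nat.factorial_zero, Nat.cast_one,
      div_one, pow_zero, mul_one]
    rw [isLittleO_one_iff]
    simpa using ((hf.continuous.tendsto t₀).sub_const (f t₀))
  | succ n ih =>
    intro f hf t₀
    rw [show ((n + 1 : ℕ) : WithTop ℕ∞) = (n : WithTop ℕ∞) + 1 by push_cast; ring] at hf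
    obtain ⟨hdiff, -, hder⟩ := contDiff_succ_iff_deriv.mp hf
    have hR : ∀ x : ℝ, HasDerivAt
        (fun t => f t - ∑ k ∈ Finset.range (n + 1 + 1),
            iteratedDeriv k f t₀ / k.factorial * (t - t₀) ^ k)
        (deriv f x - ∑ k ∈ Finset.range (n + 1),
            iteratedDeriv k (deriv f) t₀ / k.factorial * (x - t₀) ^ k) x := by
      intro x
      have hp : HasDerivAt (fun t : ℝ => ∑ k ∈ Finset.range (n + 1 + 1),
          iteratedDeriv k f t₀ / k.factorial * (t - t₀) ^ k)
          (∑ k ∈ Finset.range (n + 1 + 1),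
            iteratedDeriv k f t₀ / k.factorial * (k * (x - t₀) ^ (k - 1) * 1)) x := by
        apply HasDerivAt.fun_sum
        intro k _
        exact (((hasDerivAt_id x).sub_const t₀).pow k).const_mul _
      have heq : (∑ k ∈ Finset.range (n + 1 + 1),
            iteratedDeriv k f t₀ / k.factorial * (k * (x - t₀) ^ (k - 1) * 1))
          = ∑ k ∈ Finset.range (n + 1),
            iteratedDeriv k (deriv f) t₀ / k.factorial * (x - t₀) ^ k := by
        rw [Finset.sum_range_succ']
        simp only [Nat.cast_zero, zero_mul, mul_zero, add_zero, Nat.add_sub_cancel, mul_one]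
        refine Finset.sum_congr rfl fun i _ => ?_
        rw [← iteratedDeriv_succ']
        have hfac : (((i + 1).factorial : ℕ) : ℝ) = ((i : ℝ) + 1) * (i.factorial : ℝ) := by
          push_cast [Nat.factorial_succ]; ring
        have h1 : (i.factorial : ℝ) ≠ 0 := Nat.cast_ne_zero.mpr i.factorial_ne_zero
        have h2 : ((i : ℝ) + 1) ≠ 0 := by positivity
        rw [hfac]
        push_cast
        field_simp
      rw [← heq]
      exact ((hdiff x).hasDerivAt).sub hp
    have h0 : f t₀ - ∑ k ∈ Finset.range (n + 1 + 1),
        iteratedDeriv k f t₀ / k.factorial * (t₀ - t₀) ^ k = 0 := by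
      rw [Finset.sum_range_succ']
      simp [iteratedDeriv_zero, sub_self, zero_pow]
    exact cusp_step hR h0 (ih (deriv f) hder t₀)

/-- Iterated derivatives commute with continuous linear maps. -/
private lemma cusp_clm (g : (ℝ × ℝ) →L[ℝ] ℝ) {α : ℝ → ℝ × ℝ} (hα : ContDiff ℝ 4 α)
    (i : ℕ) (hi : (i : WithTop ℕ∞) ≤ 4) (x : ℝ) :
    iteratedDeriv i (fun t => g (α t)) x = g (iteratedDeriv i α x) := by
  have h := g.iteratedFDeriv_comp_left (hα.contDiffAt (x := x)) hi
  rw [iteratedDeriv, iteratedDeriv, show (fun t => g (α t)) = g ∘ α from rfl, h]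
  simp

/-- a C⁴ plane curve with `α′(t₀) = 0` and
`α₁″(t₀)α₂‴(t₀) − α₁‴(t₀)α₂″(t₀) ≠ 0` has a cusp of order 3/2 at `α(t₀)`:
after an invertible linear change of coordinates, the translated curve has the
local form `(c(t−t₀)² + o((t−t₀)²), d(t−t₀)³ + o((t−t₀)³))` with `c, d ≠ 0`. -/
theorem stmt5 (α : ℝ → ℝ × ℝ) (t₀ : ℝ) (hα : ContDiff ℝ 4 α)
    (h1 : deriv α t₀ = 0)
    (h2 : (iteratedDeriv 2 α t₀).1 * (iteratedDeriv 3 α t₀).2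
        - (iteratedDeriv 3 α t₀).1 * (iteratedDeriv 2 α t₀).2 ≠ 0) :
    ∃ M : Matrix (Fin 2) (Fin 2) ℝ, M.det ≠ 0 ∧
      ∃ c d : ℝ, c ≠ 0 ∧ d ≠ 0 ∧
        (fun t => M 0 0 * ((α t).1 - (α t₀).1) + M 0 1 * ((α t).2 - (α t₀).2)
            - c * (t - t₀)^2) =o[nhds t₀] (fun t => (t - t₀)^2) ∧
        (fun t => M 1 0 * ((α t).1 - (α t₀).1) + M 1 1 * ((α t).2 - (α t₀).2)
            - d * (t - t₀)^3) =o[nhds t₀] (fun t => (t - t₀)^3) := by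
  set a := (iteratedDeriv 2 α t₀).1 with ha
  set b := (iteratedDeriv 2 α t₀).2 with hb
  set p := (iteratedDeriv 3 α t₀).1 with hp
  set q := (iteratedDeriv 3 α t₀).2 with hq
  set f1 : ℝ → ℝ := fun t => (α t).1 with hf1def
  set f2 : ℝ → ℝ := fun t => (α t).2 with hf2def
  have hf1 : ContDiff ℝ 4 f1 := (ContinuousLinearMap.fst ℝ ℝ ℝ).contDiff.comp hα
  have hf2 : ContDiff ℝ 4 f2 := (ContinuousLinearMap.snd ℝ ℝ ℝ).contDiff.comp hα
  -- iterated derivatives of components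
  have hc1 : ∀ i : ℕ, (i : WithTop ℕ∞) ≤ 4 →
      iteratedDeriv i f1 t₀ = (iteratedDeriv i α t₀).1 := fun i hi =>
    cusp_clm (ContinuousLinearMap.fst ℝ ℝ ℝ) hα i hi t₀
  have hc2 : ∀ i : ℕ, (i : WithTop ℕ∞) ≤ 4 →
      iteratedDeriv i f2 t₀ = (iteratedDeriv i α t₀).2 := fun i hi =>
    cusp_clm (ContinuousLinearMap.snd ℝ ℝ ℝ) hα i hi t₀
  have h4 : ∀ i : ℕ, i ≤ 4 → (i : WithTop ℕ∞) ≤ 4 := by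
    intro i hi; exact_mod_cast Nat.cast_le.mpr hi
  have hd1 : iteratedDeriv 1 f1 t₀ = 0 := by
    rw [hc1 1 (h4 1 (by norm_num)), iteratedDeriv_one, h1]; rfl
  have hd2 : iteratedDeriv 1 f2 t₀ = 0 := by
    rw [hc2 1 (h4 1 (by norm_num)), iteratedDeriv_one, h1]; rfl
  have hv2a : iteratedDeriv 2 f1 t₀ = a := hc1 2 (h4 2 (by norm_num))
  have hv2b : iteratedDeriv 2 f2 t₀ = b := hc2 2 (h4 2 (by norm_num))
  have hv3p : iteratedDeriv 3 f1 t₀ = p := hc1 3 (h4 3 (by norm_num))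
  have hv3q : iteratedDeriv 3 f2 t₀ = q := hc2 3 (h4 3 (by norm_num))
  -- Taylor expansions
  have hle2 : ((2 : ℕ) : WithTop ℕ∞) ≤ 4 := h4 2 (by norm_num)
  have hle3 : ((3 : ℕ) : WithTop ℕ∞) ≤ 4 := h4 3 (by norm_num)
  have E12 := cusp_peano 2 f1 (hf1.of_le hle2) t₀
  have E22 := cusp_peano 2 f2 (hf2.of_le hle2) t₀
  have E13 := cusp_peano 3 f1 (hf1.of_le hle3) t₀
  have E23 := cusp_peano 3 f2 (hf2.of_le hle3) t₀
  have hsum2 : ∀ (f : ℝ → ℝ) (t : ℝ),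
      ∑ k ∈ Finset.range 3, iteratedDeriv k f t₀ / k.factorial * (t - t₀) ^ k
        = f t₀ + iteratedDeriv 1 f t₀ * (t - t₀)
          + iteratedDeriv 2 f t₀ / 2 * (t - t₀) ^ 2 := by
    intro f t
    rw [Finset.sum_range_succ, Finset.sum_range_succ, Finset.sum_range_one]
    simp [iteratedDeriv_zero, Nat.factorial]
    try ring
  have hsum3 : ∀ (f : ℝ → ℝ) (t : ℝ),
      ∑ k ∈ Finset.range 4, iteratedDeriv k f t₀ / k.factorial * (t - t₀) ^ k
        = f t₀ + iteratedDeriv 1 f t₀ * (t - t₀)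
          + iteratedDeriv 2 f t₀ / 2 * (t - t₀) ^ 2
          + iteratedDeriv 3 f t₀ / 6 * (t - t₀) ^ 3 := by
    intro f t
    rw [Finset.sum_range_succ, Finset.sum_range_succ, Finset.sum_range_succ,
      Finset.sum_range_one]
    simp [iteratedDeriv_zero, Nat.factorial]
    try ring
  have E12' : (fun t => f1 t - (f1 t₀ + a / 2 * (t - t₀) ^ 2))
      =o[nhds t₀] (fun t => (t - t₀) ^ 2) := by
    refine E12.congr_left fun t => ?_
    rw [hsum2 f1 t, hd1, hv2a]; ring
  have E22' : (fun t => f2 t - (f2 t₀ + b / 2 * (t - t₀) ^ 2))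
      =o[nhds t₀] (fun t => (t - t₀) ^ 2) := by
    refine E22.congr_left fun t => ?_
    rw [hsum2 f2 t, hd2, hv2b]; ring
  have E13' : (fun t => f1 t - (f1 t₀ + a / 2 * (t - t₀) ^ 2 + p / 6 * (t - t₀) ^ 3))
      =o[nhds t₀] (fun t => (t - t₀) ^ 3) := by
    refine E13.congr_left fun t => ?_
    rw [hsum3 f1 t, hd1, hv2a, hv3p]; ring
  have E23' : (fun t => f2 t - (f2 t₀ + b / 2 * (t - t₀) ^ 2 + q / 6 * (t - t₀) ^ 3))
      =o[nhds t₀] (fun t => (t - t₀) ^ 3) := by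
    refine E23.congr_left fun t => ?_
    rw [hsum3 f2 t, hd2, hv2b, hv3q]; ring
  -- the linear change of coordinates
  have hab : a ≠ 0 ∨ b ≠ 0 := by
    by_contra h
    push_neg at h
    exact h2 (by rw [h.1, h.2]; ring)
  have habs : a ^ 2 + b ^ 2 > 0 := by
    rcases hab with h | h <;> positivity
  refine ⟨Matrix.of ![![a, b], ![-b, a]], ?_, (a ^ 2 + b ^ 2) / 2, (a * q - p * b) / 6,
    by positivity, div_ne_zero h2 (by norm_num), ?_, ?_⟩
  · rw [Matrix.det_fin_two]
    simp only [Matrix.of_apply, Matrix.cons_val', Matrix.cons_val_zero, Matrix.cons_val_one,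
      Matrix.head_cons, Matrix.empty_val', Matrix.cons_val_fin_one, Matrix.head_fin_const]
    nlinarith
  · have G := (E12'.const_mul_left a).add (E22'.const_mul_left b)
    refine G.congr_left fun t => ?_
    simp only [Matrix.of_apply, Matrix.cons_val', Matrix.cons_val_zero, Matrix.cons_val_one,
      Matrix.head_cons, Matrix.empty_val', Matrix.cons_val_fin_one, Matrix.head_fin_const]
    show a * (f1 t - (f1 t₀ + a / 2 * (t - t₀) ^ 2))
        + b * (f2 t - (f2 t₀ + b / 2 * (t - t₀) ^ 2))
      = a * (f1 t - f1 t₀) + b * (f2 t - f2 t₀) - (a ^ 2 + b ^ 2) / 2 * (t - t₀) ^ 2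
    ring
  · have G := (E13'.const_mul_left (-b)).add (E23'.const_mul_left a)
    refine G.congr_left fun t => ?_
    simp only [Matrix.of_apply, Matrix.cons_val', Matrix.cons_val_zero, Matrix.cons_val_one,
      Matrix.head_cons, Matrix.empty_val', Matrix.cons_val_fin_one, Matrix.head_fin_const]
    show (-b) * (f1 t - (f1 t₀ + a / 2 * (t - t₀) ^ 2 + p / 6 * (t - t₀) ^ 3))
        + a * (f2 t - (f2 t₀ + b / 2 * (t - t₀) ^ 2 + q / 6 * (t - t₀) ^ 3))
      = -b * (f1 t - f1 t₀) + a * (f2 t - f2 t₀) - (a * q - p * b) / 6 * (t - t₀) ^ 3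
    ring
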